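/- arXiv:1501.01135 — 5 statements merged into one kernel-verified Lean document; each statement's English description precedes it below -/
import Mathlib

section
/- Let k ≥ 3 and r be positive integers with r < k, let p = (p_1,…,p_k) be a tuple of non-negative integers, let a ∈ {2,3,…,k−1} and D ⊆ [a−2]. Define K_{i,j} and 𝔖_{k,a} as follows: K_{i,i} = ∅ if i∈[a−2]∖D, K_{i,i} = [k] if i∈D∪{a−1}, K_{i,j} = ]i,j] for i∈{a−1,…,k−1}, j∈[k], (i,j) ≠ (a−1,a−1); 𝔖_{k,a} is the set of permutations π of [k] with π(i)=i for all i∈[a−2]. For a surjection f:[k−1]→[r], π∈𝔖_{k,a} and j∈[k−1], set H_{f,π,j} = ∪ { K_{i,π(i)} : i∈[k−1]∖{j}, f(i)=f(j) }. Then Σ sgn(π) = 0, where the sum is over all triples (S,f,π) with S∈S_{p,r}, f a surjection from [k−1] onto [r], and π∈𝔖_{k,a}, satisfying K_{i,π(i)} ⊆ S_{f(i)} for every i∈[k−1] and additionally f(a−1) ≠ f(a), a ∉ H_{f,π,a−1}, and a ∈ H_{f,π,a}. -/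
open Finset

/-- The cyclic interval `]i,j]` of `[k] = {1,…,k}`, realized inside `ZMod k`
(the element `k` of `[k]` is represented by `0 : ZMod k`). -/
def cyc (k : ℕ) [NeZero k] (i j : ZMod k) : Finset (ZMod k) :=
  Finset.univ.filter fun x => 1 ≤ (x - i).val ∧ (x - i).val ≤ (j - i).val

/-- Membership in `𝒮_{p,r}` : each `j ∈ [k]` belongs to exactly `p j` of the sets `S_1,…,S_r`. -/
def SprMem (k r : ℕ) [NeZero k] (p : ZMod k → ℕ) (S : Fin r → Finset (ZMod k)) : Prop :=
  ∀ j : ZMod k, Nat.card {i : Fin r // j ∈ S i} = p j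

/-- Membership in `ℳ_{p,r}` : member of `𝒮_{p,r}` all of whose sets are proper subsets of `[k]`. -/
def MprMem (k r : ℕ) [NeZero k] (p : ZMod k → ℕ) (S : Fin r → Finset (ZMod k)) : Prop :=
  SprMem k r p S ∧ ∀ i, S i ≠ Finset.univ

/-- `|ℳ_{p,r}|`. -/
noncomputable def Mcard (k r : ℕ) [NeZero k] (p : ZMod k → ℕ) : ℕ :=
  Nat.card {S : Fin r → Finset (ZMod k) // MprMem k r p S}

/-- `|𝒮_{p,r}|`. -/
noncomputable def Scard (k r : ℕ) [NeZero k] (p : ZMod k → ℕ) : ℕ :=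
  Nat.card {S : Fin r → Finset (ZMod k) // SprMem k r p S}

/-- `|ℳ_{q,r}|` for an integer-valued tuple `q` (empty if some entry of `q` is negative). -/
noncomputable def McardZ (k r : ℕ) [NeZero k] (q : ZMod k → ℤ) : ℕ :=
  Nat.card {S : Fin r → Finset (ZMod k) //
    (∀ j : ZMod k, (Nat.card {i : Fin r // j ∈ S i} : ℤ) = q j) ∧ ∀ i, S i ≠ Finset.univ}

/-- `alphaRel k S i j` holds iff `j = α(i,S)`. -/
def alphaRel (k : ℕ) [NeZero k] (S : Finset (ZMod k)) (i j : ZMod k) : Prop :=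
  if S = Finset.univ then j = i else j ∉ S ∧ cyc k i (j - 1) ⊆ S

/-- `betaRel k S i j` holds iff `j = β(i,S)`. -/
def betaRel (k : ℕ) [NeZero k] (S : Finset (ZMod k)) (i j : ZMod k) : Prop :=
  if S = Finset.univ then j = i else j + 1 ∉ S ∧ cyc k i j ⊆ S

/-- `gammaRel k S i j` holds iff `j = γ(i,S)`. -/
def gammaRel (k : ℕ) [NeZero k] (S : Finset (ZMod k)) (i j : ZMod k) : Prop :=
  if S = Finset.univ then j = i
  else if i ∈ S then j = i - 1
  else j + 1 ∉ S ∧ cyc k i j ⊆ S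

/-- The digraph on `[k]` with the `k-1` arcs `(i, ζ(i, S_{f i}))` for `i ∈ [k-1]`
(the nonzero elements of `ZMod k`) is a tree, i.e. a spanning tree oriented toward
the root `k` (represented by `0`): following the arcs from any vertex reaches the root. -/
def GIsTree (k r : ℕ) [NeZero k] (zeta : Finset (ZMod k) → ZMod k → ZMod k → Prop)
    (S : Fin r → Finset (ZMod k)) (f : {i : ZMod k // i ≠ 0} → Fin r) : Prop :=
  ∃ g : ZMod k → ZMod k, g 0 = 0 ∧
    (∀ i : {i : ZMod k // i ≠ 0}, zeta (S (f i)) i.1 (g i.1)) ∧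
    ∀ x : ZMod k, ∃ n : ℕ, g^[n] x = 0

/-- Sample space: pairs of a tuple `S ∈ ℳ_{p,r}` and a surjection `f : [k-1] → [r]`,
with the uniform probability measure. -/
abbrev OmM (k r : ℕ) [NeZero k] (p : ZMod k → ℕ) : Type :=
  {om : (Fin r → Finset (ZMod k)) × ({i : ZMod k // i ≠ 0} → Fin r) //
    MprMem k r p om.1 ∧ Function.Surjective om.2}

/-- Sample space `Ω`: pairs of a tuple `S ∈ 𝒮_{p,r}` and a surjection `f : [k-1] → [r]`,
with the uniform probability measure. -/
abbrev OmS (k r : ℕ) [NeZero k] (p : ZMod k → ℕ) : Type :=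
  {om : (Fin r → Finset (ZMod k)) × ({i : ZMod k // i ≠ 0} → Fin r) //
    SprMem k r p om.1 ∧ Function.Surjective om.2}

/-- Uniform probability of an event `A` in a (finite) sample space `Om`. -/
noncomputable def PrU {Om : Type} (A : Set Om) : ℚ :=
  (Nat.card A : ℚ) / (Nat.card Om : ℚ)

/-- The `Pr`-determinant of a `k × k` matrix of events (rows and columns indexed by
`[k]`, i.e. by `ZMod k`). -/
noncomputable def Pdet {k : ℕ} [NeZero k] {Om : Type} (E : ZMod k → ZMod k → Set Om) : ℚ :=
  ∑ pi : Equiv.Perm (ZMod k), ((Equiv.Perm.sign pi : ℤ) : ℚ) * PrU (⋂ i : ZMod k, E i (pi i))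

/-- The matrix of events `M_α`: `M_{α,i,j} = I^{f(i)}_{i,j}` for `i ∈ [k-1]`, and the
row of `i = k` (i.e. `0`) is constant equal to `Ω`. -/
def Malpha (k r : ℕ) [NeZero k] (p : ZMod k → ℕ) (i j : ZMod k) : Set (OmS k r p) :=
  {om : OmS k r p | ∀ hi : i ≠ 0, cyc k i j ⊆ om.1.1 (om.1.2 ⟨i, hi⟩)}

/-- The matrix of events `M_β`: `M_{β,i,j} = J^{f(i)}_{i,j+1}` for `i ∈ [k-1]`, and the
row of `i = k` (i.e. `0`) is constant equal to `Ω`. -/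
def Mbeta (k r : ℕ) [NeZero k] (p : ZMod k → ℕ) (i j : ZMod k) : Set (OmS k r p) :=
  {om : OmS k r p | ∀ hi : i ≠ 0,
    if i = j + 1 then om.1.1 (om.1.2 ⟨i, hi⟩) = Finset.univ
    else cyc k i (j + 1) ⊆ om.1.1 (om.1.2 ⟨i, hi⟩)}

/-- Membership of `om` in the event `J^{f(i)}_{a,b}`. -/
def Jmem (k r : ℕ) [NeZero k] (p : ZMod k → ℕ) (om : OmS k r p)
    (i : {i : ZMod k // i ≠ 0}) (a b : ZMod k) : Prop :=
  if a = b then om.1.1 (om.1.2 i) = Finset.univ else cyc k a b ⊆ om.1.1 (om.1.2 i)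

/-- The sets `K_{i,j}` of Section 5.1 (for given `a ∈ {2,…,k-1}` and `D ⊆ [a-2]`):
`K_{i,i} = ∅` for `i ∈ [a-2] ∖ D`, `K_{i,i} = [k]` for `i ∈ D ∪ {a-1}`, and
`K_{i,j} = ]i,j]` for `i ∈ {a-1,…,k-1}`, `j ∈ [k]`, `(i,j) ≠ (a-1,a-1)`.
(The element `m ∈ [k]` is represented by `(m : ZMod k)`, so `i = a-1` means
`i.val + 1 = a`.) -/
def Kset (k a : ℕ) [NeZero k] (D : Finset (ZMod k)) (i j : ZMod k) : Finset (ZMod k) :=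
  if i = j then (if i.val + 1 = a ∨ i ∈ D then Finset.univ else ∅) else cyc k i j

/-- `H_{f,π,j} = ∪ { K_{i,π(i)} : i ∈ [k-1] ∖ {j}, f(i) = f(j) }`. -/
def Hset (k a r : ℕ) [NeZero k] (D : Finset (ZMod k))
    (f : {i : ZMod k // i ≠ 0} → Fin r) (pi : Equiv.Perm (ZMod k))
    (j : {i : ZMod k // i ≠ 0}) : Finset (ZMod k) :=
  (Finset.univ.filter fun i : {i : ZMod k // i ≠ 0} => i ≠ j ∧ f i = f j).biUnion
    (fun i => Kset k a D i.1 (pi i.1))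

/-! ### Auxiliary lemmas for Lemma 11 -/

section YAux

variable {k : ℕ} [NeZero k]

lemma mem_cyc {i j x : ZMod k} :
    x ∈ cyc k i j ↔ 1 ≤ (x - i).val ∧ (x - i).val ≤ (j - i).val := by
  simp [cyc]

lemma one_le_val_sub {x i : ZMod k} (h : x ≠ i) : 1 ≤ (x - i).val := by
  rw [Nat.one_le_iff_ne_zero]
  simpa [ZMod.val_eq_zero, sub_eq_zero] using h

lemma cyc_subset_left {i j c : ZMod k} (h : c ∈ cyc k i j) : cyc k c j ⊆ cyc k i j := by
  rw [mem_cyc] at h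
  intro x hx
  rw [mem_cyc] at hx ⊢
  have e0 : (j - c : ZMod k) = (j - i) - (c - i) := by ring
  have e1 : (j - c).val = (j - i).val - (c - i).val := by
    rw [e0, ZMod.val_sub h.2]
  have hjk : (j - i : ZMod k).val < k := ZMod.val_lt _
  have e3 : (x - c).val + (c - i).val < k := by omega
  have e2 : (x - i : ZMod k) = (x - c) + (c - i) := by ring
  rw [e2, ZMod.val_add_of_lt e3]
  omega

lemma cyc_subset_init {i j c : ZMod k} (h : c ∈ cyc k i j) : cyc k i c ⊆ cyc k i j := by
  rw [mem_cyc] at h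
  intro x hx
  rw [mem_cyc] at hx ⊢
  exact ⟨hx.1, le_trans hx.2 h.2⟩

lemma cyc_split {i j c : ZMod k} (h : c ∈ cyc k i j) :
    cyc k i j ⊆ cyc k i c ∪ cyc k c j := by
  rw [mem_cyc] at h
  intro x hx
  rw [mem_cyc] at hx
  rcases le_or_gt (x - i).val (c - i).val with hle | hlt
  · exact Finset.mem_union_left _ (mem_cyc.mpr ⟨hx.1, hle⟩)
  · refine Finset.mem_union_right _ (mem_cyc.mpr ?_)
    have e0 : (x - c : ZMod k) = (x - i) - (c - i) := by ring
    have e1 : (x - c).val = (x - i).val - (c - i).val := by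
      rw [e0, ZMod.val_sub (le_of_lt hlt)]
    have e2 : (j - c : ZMod k) = (j - i) - (c - i) := by ring
    have e3 : (j - c).val = (j - i).val - (c - i).val := by
      rw [e2, ZMod.val_sub h.2]
    omega

lemma cyc_cover {i j j' c : ZMod k} (hci : c ≠ i) (h1 : c ∈ cyc k i j')
    (h2 : c ∉ cyc k i j) (x : ZMod k) : x ∈ cyc k i j' ∪ cyc k c j := by
  rw [mem_cyc] at h1
  by_cases hx : x ∈ cyc k i j'
  · exact Finset.mem_union_left _ hx
  refine Finset.mem_union_right _ (mem_cyc.mpr ?_)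
  have hc1 : 1 ≤ (c - i : ZMod k).val := one_le_val_sub hci
  have hji : (j - i : ZMod k).val < (c - i).val := by
    by_contra hcon
    exact h2 (mem_cyc.mpr ⟨hc1, by omega⟩)
  have hcne : (c - i : ZMod k) ≠ 0 := sub_ne_zero_of_ne hci
  have hnegv : (i - c : ZMod k).val = k - (c - i).val := by
    have e : (i - c : ZMod k) = -(c - i) := by ring
    rw [e, ZMod.neg_val, if_neg hcne]
  have hcik : (c - i : ZMod k).val < k := ZMod.val_lt _
  have e0 : (j - c : ZMod k) = (j - i) + (i - c) := by ring
  have e1 : (j - c : ZMod k).val = (j - i).val + (k - (c - i).val) := by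
    rw [e0, ZMod.val_add_of_lt (by omega), hnegv]
  rcases Nat.eq_zero_or_pos ((x - i : ZMod k)).val with h0 | hpos
  · have hxi : x = i := by
      have := (ZMod.val_eq_zero (x - i)).mp h0
      have := sub_eq_zero.mp this
      exact this
    have e2 : (x - c : ZMod k).val = k - (c - i).val := by rw [hxi]; exact hnegv
    constructor <;> omega
  · have hgt : (j' - i : ZMod k).val < (x - i).val := by
      rw [mem_cyc] at hx
      push_neg at hx
      exact hx hpos
    have hle : (c - i : ZMod k).val ≤ (x - i).val := by omega
    have e2 : (x - c : ZMod k) = (x - i) - (c - i) := by ring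
    have e3 : (x - c : ZMod k).val = (x - i).val - (c - i).val := by
      rw [e2, ZMod.val_sub hle]
    have hxk : (x - i : ZMod k).val < k := ZMod.val_lt _
    constructor <;> omega

end YAux

open scoped Classical in
/-- The witness set `W(x)` of indices `i ≠ a` with `f i = f a` and `a ∈ K_{i,π(i)}`. -/
noncomputable def Ywit (k a r : ℕ) [NeZero k] (D : Finset (ZMod k))
    (aa : {i : ZMod k // i ≠ 0})
    (x : (Fin r → Finset (ZMod k)) × ({i : ZMod k // i ≠ 0} → Fin r) × Equiv.Perm (ZMod k)) :
    Finset {i : ZMod k // i ≠ 0} :=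
  Finset.univ.filter fun i =>
    i ≠ aa ∧ x.2.1 i = x.2.1 aa ∧ (a : ZMod k) ∈ Kset k a D i.1 (x.2.2 i.1)

open scoped Classical in
/-- The point at which we swap `π`. -/
noncomputable def Ypt (k a r : ℕ) [NeZero k] (D : Finset (ZMod k))
    (aa : {i : ZMod k // i ≠ 0})
    (x : (Fin r → Finset (ZMod k)) × ({i : ZMod k // i ≠ 0} → Fin r) × Equiv.Perm (ZMod k)) :
    ZMod k :=
  if x.1 (x.2.1 aa) = Finset.univ then 0
  else if h : (Ywit k a r D aa x).Nonempty then h.choose.1 else 0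

/-- The sign-reversing involution used to prove Lemma 11. -/
noncomputable def Ymap (k a r : ℕ) [NeZero k] (D : Finset (ZMod k))
    (aa : {i : ZMod k // i ≠ 0})
    (x : (Fin r → Finset (ZMod k)) × ({i : ZMod k // i ≠ 0} → Fin r) × Equiv.Perm (ZMod k)) :
    (Fin r → Finset (ZMod k)) × ({i : ZMod k // i ≠ 0} → Fin r) × Equiv.Perm (ZMod k) :=
  (x.1, x.2.1, x.2.2 * Equiv.swap (Ypt k a r D aa x) aa.1)

lemma Ypt_ne_aa (k a r : ℕ) [NeZero k] (D : Finset (ZMod k)) (aa : {i : ZMod k // i ≠ 0})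
    (x : (Fin r → Finset (ZMod k)) × ({i : ZMod k // i ≠ 0} → Fin r) × Equiv.Perm (ZMod k)) :
    Ypt k a r D aa x ≠ aa.1 := by
  unfold Ypt
  split_ifs with h1 h2
  · exact fun h => aa.2 h.symm
  · have hmem := h2.choose_spec
    simp only [Ywit, Finset.mem_filter, Finset.mem_univ, true_and] at hmem
    exact fun hcon => hmem.1 (Subtype.ext hcon)
  · exact fun h => aa.2 h.symm

lemma dite_choose_congr {α β : Type*} (F : α → β) (z : β) {s t : Finset α} (h : s = t) :
    (if h' : s.Nonempty then F h'.choose else z)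
      = (if h' : t.Nonempty then F h'.choose else z) := by
  subst h; rfl

open scoped Classical in
/-- Main step for Lemma 11: the involution `Ymap` preserves membership in the set of
triples being counted, and preserves the witness set. -/
theorem Ykey (k r : ℕ) [NeZero k] (hk : 3 ≤ k)
    (p : ZMod k → ℕ) (a : ℕ) (ha : 2 ≤ a) (hak : a ≤ k - 1)
    (D : Finset (ZMod k)) (hD : ∀ i ∈ D, 1 ≤ i.val ∧ i.val ≤ a - 2)
    (am aa : {i : ZMod k // i ≠ 0}) (haa : aa.1 = (a : ZMod k))
    (x : (Fin r → Finset (ZMod k)) × ({i : ZMod k // i ≠ 0} → Fin r) × Equiv.Perm (ZMod k))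
    (hx : SprMem k r p x.1 ∧ Function.Surjective x.2.1 ∧
        (∀ i : ZMod k, 1 ≤ i.val → i.val ≤ a - 2 → x.2.2 i = i) ∧
        (∀ i : {i : ZMod k // i ≠ 0}, Kset k a D i.1 (x.2.2 i.1) ⊆ x.1 (x.2.1 i)) ∧
        x.2.1 am ≠ x.2.1 aa ∧
        (a : ZMod k) ∉ Hset k a r D x.2.1 x.2.2 am ∧
        (a : ZMod k) ∈ Hset k a r D x.2.1 x.2.2 aa) :
    (SprMem k r p (Ymap k a r D aa x).1 ∧ Function.Surjective (Ymap k a r D aa x).2.1 ∧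
        (∀ i : ZMod k, 1 ≤ i.val → i.val ≤ a - 2 → (Ymap k a r D aa x).2.2 i = i) ∧
        (∀ i : {i : ZMod k // i ≠ 0}, Kset k a D i.1 ((Ymap k a r D aa x).2.2 i.1) ⊆
          (Ymap k a r D aa x).1 ((Ymap k a r D aa x).2.1 i)) ∧
        (Ymap k a r D aa x).2.1 am ≠ (Ymap k a r D aa x).2.1 aa ∧
        (a : ZMod k) ∉ Hset k a r D (Ymap k a r D aa x).2.1 (Ymap k a r D aa x).2.2 am ∧
        (a : ZMod k) ∈ Hset k a r D (Ymap k a r D aa x).2.1 (Ymap k a r D aa x).2.2 aa) ∧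
      Ywit k a r D aa (Ymap k a r D aa x) = Ywit k a r D aa x := by
  obtain ⟨S, f, π⟩ := x
  obtain ⟨aA, hane⟩ := aa
  dsimp only at haa
  subst haa
  obtain ⟨hS, hfsurj, hfix, hrow, hfne, hHm, hHa⟩ := hx
  dsimp only at hS hfsurj hfix hrow hfne hHm hHa
  set aa : {i : ZMod k // i ≠ 0} := ⟨(a : ZMod k), hane⟩ with haadef
  -- numeric facts
  have hak' : a < k := by omega
  have haav : ((a : ZMod k)).val = a := by
    rw [ZMod.val_natCast]; exact Nat.mod_eq_of_lt hak'
  have haaD : (a : ZMod k) ∉ D := by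
    intro hmem
    have := hD _ hmem
    rw [haav] at this
    omega
  have hKaa : Kset k a D (a : ZMod k) (a : ZMod k) = ∅ := by
    rw [Kset, if_pos rfl, if_neg]
    push_neg
    exact ⟨by rw [haav]; omega, haaD⟩
  -- the witness set is nonempty
  have hWne : (Ywit k a r D aa (S, f, π)).Nonempty := by
    have hHa' := hHa
    simp only [Hset, Finset.mem_biUnion, Finset.mem_filter, Finset.mem_univ, true_and] at hHa'
    obtain ⟨i, ⟨hi1, hi2⟩, hKi⟩ := hHa'
    refine ⟨i, ?_⟩
    simp only [Ywit, Finset.mem_filter, Finset.mem_univ, true_and]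
    exact ⟨hi1, hi2, hKi⟩
  -- properties of witnesses when `S (f aa)` is proper
  have hwit : ∀ w ∈ Ywit k a r D aa (S, f, π), S (f aa) ≠ Finset.univ →
      w ≠ aa ∧ f w = f aa ∧ π w.1 ≠ w.1 ∧ (a : ZMod k) ∈ cyc k w.1 (π w.1) ∧
        cyc k w.1 (π w.1) ⊆ S (f aa) ∧ (a : ZMod k) ≠ w.1 := by
    intro w hw hU
    simp only [Ywit, Finset.mem_filter, Finset.mem_univ, true_and] at hw
    obtain ⟨hwaa, hwf, hwK⟩ := hw
    have hwa : (a : ZMod k) ≠ w.1 := by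
      intro h
      exact hwaa (Subtype.ext h.symm)
    have hwne : π w.1 ≠ w.1 := by
      intro heq
      rw [Kset, if_pos heq.symm] at hwK
      by_cases hcond : w.1.val + 1 = a ∨ w.1 ∈ D
      · rw [if_pos hcond] at hwK
        have h2 := hrow w
        rw [Kset, if_pos heq.symm, if_pos hcond] at h2
        exact hU (by rw [← hwf]; exact Finset.univ_subset_iff.mp h2)
      · rw [if_neg hcond] at hwK
        exact absurd hwK (Finset.notMem_empty _)
    have hKeq : Kset k a D w.1 (π w.1) = cyc k w.1 (π w.1) := by
      rw [Kset, if_neg (Ne.symm hwne)]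
    refine ⟨hwaa, hwf, hwne, ?_, ?_, hwa⟩
    · rw [hKeq] at hwK; exact hwK
    · have h2 := hrow w
      rw [hKeq, hwf] at h2
      exact h2
  -- the key geometric lemma about witnesses
  have hKL : ∀ w ∈ Ywit k a r D aa (S, f, π), S (f aa) ≠ Finset.univ →
      ((a : ZMod k) ∈ Kset k a D w.1 (π aa.1) ∧
        Kset k a D w.1 (π aa.1) ⊆ S (f aa) ∧
        Kset k a D aa.1 (π w.1) ⊆ S (f aa)) := by
    intro w hw hU
    obtain ⟨hwaa, hwf, hwne, hcycw, hsubw, hwa⟩ := hwit w hw hU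
    have hwa' : w.1 ≠ (a : ZMod k) := Ne.symm hwa
    have klC : Kset k a D aa.1 (π w.1) ⊆ S (f aa) := by
      show Kset k a D (a : ZMod k) (π w.1) ⊆ S (f aa)
      by_cases hcC : (a : ZMod k) = π w.1
      · rw [← hcC, hKaa]
        exact Finset.empty_subset _
      · rw [Kset, if_neg hcC]
        exact subset_trans (cyc_subset_left hcycw) hsubw
    by_cases h2 : π aa.1 = aa.1
    · have hKieq : Kset k a D w.1 (π aa.1) = cyc k w.1 (a : ZMod k) := by
        show Kset k a D w.1 (π (a : ZMod k)) = cyc k w.1 (a : ZMod k)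
        rw [show π (a : ZMod k) = (a : ZMod k) from h2, Kset, if_neg hwa']
      refine ⟨?_, ?_, klC⟩
      · rw [hKieq]
        exact mem_cyc.mpr ⟨one_le_val_sub hwa, le_refl _⟩
      · rw [hKieq]
        exact subset_trans (cyc_subset_init hcycw) hsubw
    · have hrowaa : cyc k (a : ZMod k) (π aa.1) ⊆ S (f aa) := by
        have h3 := hrow aa
        rw [Kset, if_neg (fun h => h2 h.symm)] at h3
        exact h3
      by_cases h3 : (a : ZMod k) ∈ cyc k w.1 (π aa.1)
      · have hwne2 : w.1 ≠ π aa.1 := by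
          intro h
          rw [mem_cyc, ← h] at h3
          have h4 : ((w.1 : ZMod k) - w.1).val = 0 := by rw [sub_self, ZMod.val_zero]
          omega
        refine ⟨?_, ?_, klC⟩
        · rw [Kset, if_neg hwne2]; exact h3
        · rw [Kset, if_neg hwne2]
          exact subset_trans (cyc_split h3)
            (Finset.union_subset (subset_trans (cyc_subset_init hcycw) hsubw) hrowaa)
      · exfalso
        apply hU
        rw [Finset.eq_univ_iff_forall]
        intro y
        rcases Finset.mem_union.mp (cyc_cover hwa hcycw h3 y) with hy | hy
        · exact hsubw hy
        · exact hrowaa hy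
  -- now the two branches
  by_cases hU : S (f aa) = Finset.univ
  · -- branch 1 : `S (f aa) = univ`, swap at `0`
    have hc0 : Ypt k a r D aa (S, f, π) = 0 := by
      unfold Ypt
      dsimp only
      rw [if_pos hU]
    simp only [Ymap, hc0]
    set σ : Equiv.Perm (ZMod k) := Equiv.swap 0 aa.1 with hσdef
    have hπ' : ∀ i : {i : ZMod k // i ≠ 0}, i ≠ aa → (π * σ) i.1 = π i.1 := by
      intro i hi
      rw [Equiv.Perm.mul_apply, Equiv.swap_apply_of_ne_of_ne i.2 (fun h => hi (Subtype.ext h))]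
    refine ⟨⟨hS, hfsurj, ?_, ?_, hfne, ?_, ?_⟩, ?_⟩
    · -- fixes [a-2]
      intro y h1 h2
      have hy0 : y ≠ 0 := by
        intro h
        rw [h, ZMod.val_zero] at h1
        omega
      have hyaa : y ≠ aa.1 := by
        intro h
        rw [h] at h2
        have : ((a : ZMod k)).val ≤ a - 2 := h2
        rw [haav] at this
        omega
      rw [Equiv.Perm.mul_apply, Equiv.swap_apply_of_ne_of_ne hy0 hyaa]
      exact hfix y h1 h2
    · -- rows
      intro i
      by_cases hiaa : i = aa
      · subst hiaa
        rw [hU]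
        exact Finset.subset_univ _
      · rw [hπ' i hiaa]
        exact hrow i
    · -- a ∉ H am
      have hHeq : Hset k a r D f (π * σ) am = Hset k a r D f π am := by
        simp only [Hset]
        apply Finset.biUnion_congr rfl
        intro i hi
        rw [Finset.mem_filter] at hi
        have hiaa : i ≠ aa := by
          intro h
          rw [h] at hi
          exact hfne hi.2.2.symm
        rw [hπ' i hiaa]
      rw [hHeq]
      exact hHm
    · -- a ∈ H aa
      have hHa' := hHa
      simp only [Hset, Finset.mem_biUnion, Finset.mem_filter, Finset.mem_univ, true_and]
        at hHa' ⊢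
      obtain ⟨i, hi, hKi⟩ := hHa'
      refine ⟨i, hi, ?_⟩
      rw [hπ' i hi.1]
      exact hKi
    · -- Ywit equality
      simp only [Ywit]
      apply Finset.filter_congr
      intro i _
      constructor
      · rintro ⟨h1, h2, h3⟩
        exact ⟨h1, h2, by rwa [hπ' i h1] at h3⟩
      · rintro ⟨h1, h2, h3⟩
        exact ⟨h1, h2, by rwa [hπ' i h1]⟩
  · -- branch 2 : `S (f aa)` proper, swap at the chosen witness
    have hcw : Ypt k a r D aa (S, f, π) = hWne.choose.1 := by
      unfold Ypt
      dsimp only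
      rw [if_neg hU, dif_pos hWne]
    set w : {i : ZMod k // i ≠ 0} := hWne.choose with hwdef
    have hw : w ∈ Ywit k a r D aa (S, f, π) := hWne.choose_spec
    obtain ⟨hwaa, hwf, hwne, hcycw, hsubw, hwa⟩ := hwit w hw hU
    obtain ⟨klA, klB, klC⟩ := hKL w hw hU
    have hwK : (a : ZMod k) ∈ Kset k a D w.1 (π w.1) := by
      have hw' := hw
      simp only [Ywit, Finset.mem_filter, Finset.mem_univ, true_and] at hw'
      exact hw'.2.2
    simp only [Ymap, hcw]
    set σ : Equiv.Perm (ZMod k) := Equiv.swap w.1 aa.1 with hσdef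
    have hπ'w : (π * σ) w.1 = π aa.1 := by
      rw [Equiv.Perm.mul_apply, Equiv.swap_apply_left]
    have hπ'aa : (π * σ) aa.1 = π w.1 := by
      rw [Equiv.Perm.mul_apply, Equiv.swap_apply_right]
    have hπ' : ∀ i : {i : ZMod k // i ≠ 0}, i ≠ aa → i ≠ w → (π * σ) i.1 = π i.1 := by
      intro i h1 h2
      rw [Equiv.Perm.mul_apply,
        Equiv.swap_apply_of_ne_of_ne (fun h => h2 (Subtype.ext h)) (fun h => h1 (Subtype.ext h))]
    refine ⟨⟨hS, hfsurj, ?_, ?_, hfne, ?_, ?_⟩, ?_⟩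
    · -- fixes [a-2]
      intro y h1 h2
      have hyw : y ≠ w.1 := by
        intro h
        apply hwne
        rw [← h]
        exact hfix y h1 h2
      have hyaa : y ≠ aa.1 := by
        intro h
        rw [h] at h2
        have : ((a : ZMod k)).val ≤ a - 2 := h2
        rw [haav] at this
        omega
      rw [Equiv.Perm.mul_apply, Equiv.swap_apply_of_ne_of_ne hyw hyaa]
      exact hfix y h1 h2
    · -- rows
      intro i
      by_cases hiw : i = w
      · subst hiw
        rw [hπ'w, hwf]
        exact klB
      by_cases hiaa : i = aa
      · subst hiaa
        rw [hπ'aa]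
        exact klC
      · rw [hπ' i hiaa hiw]
        exact hrow i
    · -- a ∉ H am
      have hHeq : Hset k a r D f (π * σ) am = Hset k a r D f π am := by
        simp only [Hset]
        apply Finset.biUnion_congr rfl
        intro i hi
        rw [Finset.mem_filter] at hi
        have hiaa : i ≠ aa := by
          intro h
          rw [h] at hi
          exact hfne hi.2.2.symm
        have hiw : i ≠ w := by
          intro h
          rw [h] at hi
          exact hfne (hwf ▸ hi.2.2).symm
        rw [hπ' i hiaa hiw]
      rw [hHeq]
      exact hHm
    · -- a ∈ H aa
      simp only [Hset, Finset.mem_biUnion, Finset.mem_filter, Finset.mem_univ, true_and]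
      refine ⟨w, ⟨hwaa, hwf⟩, ?_⟩
      rw [hπ'w]
      exact klA
    · -- Ywit equality
      simp only [Ywit]
      apply Finset.filter_congr
      intro i _
      by_cases hiw : i = w
      · subst hiw
        constructor
        · rintro ⟨h1, h2, -⟩
          exact ⟨h1, h2, hwK⟩
        · rintro ⟨h1, h2, -⟩
          exact ⟨h1, h2, by rw [hπ'w]; exact klA⟩
      · constructor
        · rintro ⟨h1, h2, h3⟩
          exact ⟨h1, h2, by rwa [hπ' i h1 hiw] at h3⟩
        · rintro ⟨h1, h2, h3⟩
          exact ⟨h1, h2, by rwa [hπ' i h1 hiw]⟩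


open scoped Classical in
/-- Lemma 11 (`Y = 0`): the signed count of triples `(S,f,π)` in `Ω(N^{a,D})` with
`f(a-1) ≠ f(a)`, `a ∉ H_{f,π,a-1}` and `a ∈ H_{f,π,a}` is zero. Here `am` and `aa`
denote the elements `a-1` and `a` of `[k-1]`. -/
theorem signed_sum_Y (k r : ℕ) [NeZero k] (hk : 3 ≤ k) (hr : 0 < r) (hrk : r < k)
    (p : ZMod k → ℕ) (a : ℕ) (ha : 2 ≤ a) (hak : a ≤ k - 1)
    (D : Finset (ZMod k)) (hD : ∀ i ∈ D, 1 ≤ i.val ∧ i.val ≤ a - 2)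
    (am aa : {i : ZMod k // i ≠ 0}) (ham : am.1 = (a : ZMod k) - 1)
    (haa : aa.1 = (a : ZMod k)) :
    ∑ x ∈ Finset.univ.filter (fun x : (Fin r → Finset (ZMod k)) ×
          ({i : ZMod k // i ≠ 0} → Fin r) × Equiv.Perm (ZMod k) =>
        SprMem k r p x.1 ∧ Function.Surjective x.2.1 ∧
        (∀ i : ZMod k, 1 ≤ i.val → i.val ≤ a - 2 → x.2.2 i = i) ∧
        (∀ i : {i : ZMod k // i ≠ 0}, Kset k a D i.1 (x.2.2 i.1) ⊆ x.1 (x.2.1 i)) ∧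
        x.2.1 am ≠ x.2.1 aa ∧
        (a : ZMod k) ∉ Hset k a r D x.2.1 x.2.2 am ∧
        (a : ZMod k) ∈ Hset k a r D x.2.1 x.2.2 aa),
      (Equiv.Perm.sign x.2.2 : ℤ) = 0 := by
  classical
  apply Finset.sum_involution (fun x _ => Ymap k a r D aa x)
  · intro x hx
    have hcne : Ypt k a r D aa x ≠ aa.1 := Ypt_ne_aa k a r D aa x
    have hs : Equiv.Perm.sign (Ymap k a r D aa x).2.2 = - Equiv.Perm.sign x.2.2 := by
      show Equiv.Perm.sign (x.2.2 * Equiv.swap (Ypt k a r D aa x) aa.1) = _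
      rw [map_mul, Equiv.Perm.sign_swap hcne, mul_neg_one]
    rw [hs, Units.val_neg]
    ring
  · intro x hx _
    intro heq
    have h1 : (Ymap k a r D aa x).2.2 aa.1 = x.2.2 aa.1 := by rw [heq]
    have h2 : x.2.2 (Equiv.swap (Ypt k a r D aa x) aa.1 aa.1) = x.2.2 aa.1 := h1
    have h3 := x.2.2.injective h2
    rw [Equiv.swap_apply_right] at h3
    exact Ypt_ne_aa k a r D aa x h3
  · intro x hx
    rw [Finset.mem_filter] at hx ⊢
    exact ⟨Finset.mem_univ _, (Ykey k r hk p a ha hak D hD am aa haa x hx.2).1⟩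
  · intro x hx
    obtain ⟨S, f, π⟩ := x
    have hkey := Ykey k r hk p a ha hak D hD am aa haa (S, f, π)
      ((Finset.mem_filter.mp hx).2)
    have hWeq := hkey.2
    dsimp only [Ymap] at hWeq
    have hpt : Ypt k a r D aa (Ymap k a r D aa (S, f, π)) = Ypt k a r D aa (S, f, π) := by
      unfold Ypt
      dsimp only [Ymap]
      by_cases hU : S (f aa) = Finset.univ
      · simp only [hU, ↓reduceIte]
      · simp only [hU, ↓reduceIte]
        exact dite_choose_congr (fun i : {i : ZMod k // i ≠ 0} => i.1) 0 hWeq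
    show (S, f, (π * Equiv.swap (Ypt k a r D aa (S, f, π)) aa.1) *
        Equiv.swap (Ypt k a r D aa (Ymap k a r D aa (S, f, π))) aa.1) = (S, f, π)
    rw [hpt, mul_assoc, Equiv.swap_mul_self, mul_one]
end

section
/- Let k ≥ 3 and r be positive integers with r < k, let p = (p_1,…,p_k) be a tuple of non-negative integers, let a ∈ {2,3,…,k−1} and D ⊆ [a−2]. Define K_{i,j} and 𝔖_{k,a} as follows: K_{i,i} = ∅ if i∈[a−2]∖D, K_{i,i} = [k] if i∈D∪{a−1}, K_{i,j} = ]i,j] for i∈{a−1,…,k−1}, j∈[k], (i,j) ≠ (a−1,a−1); 𝔖_{k,a} is the set of permutations π of [k] with π(i)=i for all i∈[a−2]. For a surjection f:[k−1]→[r], π∈𝔖_{k,a} and j∈[k−1], set H_{f,π,j} = ∪ { K_{i,π(i)} : i∈[k−1]∖{j}, f(i)=f(j) }. Then Σ sgn(π) = 0, where the sum is over all triples (S,f,π) with S∈S_{p,r}, f a surjection from [k−1] onto [r], and π∈𝔖_{k,a}, satisfying K_{i,π(i)} ⊆ S_{f(i)} for every i∈[k−1] and additionally f(a−1) ≠ f(a)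 and a ∈ H_{f,π,a−1}. -/
open Finset

section Helpers

variable {k : ℕ} [NeZero k]

lemma natCast_val_self (u : ZMod k) : ((u.val : ℕ) : ZMod k) = u :=
  ZMod.natCast_rightInverse u

lemma zval_sub {u v : ZMod k} (h : v.val ≤ u.val) : (u - v).val = u.val - v.val := by
  have e : u - v = ((u.val - v.val : ℕ) : ZMod k) := by
    rw [Nat.cast_sub h, natCast_val_self, natCast_val_self]
  rw [e, ZMod.val_cast_of_lt (lt_of_le_of_lt (Nat.sub_le _ _) (ZMod.val_lt u))]

lemma cyc_suffix {u v w : ZMod k} (h : (v - u).val ≤ (w - u).val) :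
    cyc k v w ⊆ cyc k u w := by
  intro x hx
  rw [mem_cyc] at hx ⊢
  obtain ⟨h1, h2⟩ := hx
  have e1 : w - v = (w - u) - (v - u) := by ring
  rw [e1, zval_sub h] at h2
  have hwu := ZMod.val_lt (w - u)
  have e2 : x - u = (x - v) + (v - u) := by ring
  have hlt : (x - v).val + (v - u).val < k := by omega
  rw [e2, ZMod.val_add, Nat.mod_eq_of_lt hlt]
  omega

end Helpers

open scoped Classical in
/-- The set of witnesses for `a ∈ H`. -/
noncomputable def Wfin (k a : ℕ) [NeZero k] {r : ℕ} (D : Finset (ZMod k))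
    (f : {i : ZMod k // i ≠ 0} → Fin r) (c : Fin r) (m : ZMod k)
    (pi : Equiv.Perm (ZMod k)) : Finset (ZMod k) :=
  Finset.univ.filter fun i =>
    (∃ h : i ≠ 0, f ⟨i, h⟩ = c) ∧ i ≠ m ∧ (a : ZMod k) ∈ Kset k a D i (pi i)

open scoped Classical in
/-- The canonical (minimal-value) witness. -/
noncomputable def pickT (k a : ℕ) [NeZero k] {r : ℕ} (D : Finset (ZMod k))
    (f : {i : ZMod k // i ≠ 0} → Fin r) (c : Fin r) (m : ZMod k)
    (pi : Equiv.Perm (ZMod k)) : ZMod k :=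
  if h : (Wfin k a D f c m pi).Nonempty
  then ((((Wfin k a D f c m pi).image ZMod.val).min' (h.image _) : ℕ) : ZMod k)
  else 0

lemma pickT_mem {k a : ℕ} [NeZero k] {r : ℕ} {D : Finset (ZMod k)}
    {f : {i : ZMod k // i ≠ 0} → Fin r} {c : Fin r} {m : ZMod k}
    {pi : Equiv.Perm (ZMod k)} (h : (Wfin k a D f c m pi).Nonempty) :
    pickT k a D f c m pi ∈ Wfin k a D f c m pi := by
  rw [pickT, dif_pos h]
  obtain ⟨w, hw, hv⟩ := Finset.mem_image.mp (Finset.min'_mem _ (h.image ZMod.val))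
  rw [← hv, natCast_val_self]
  exact hw

lemma pickT_congr {k a : ℕ} [NeZero k] {r : ℕ} {D : Finset (ZMod k)}
    {f : {i : ZMod k // i ≠ 0} → Fin r} {c : Fin r} {m : ZMod k}
    {pi1 pi2 : Equiv.Perm (ZMod k)} (h : Wfin k a D f c m pi1 = Wfin k a D f c m pi2) :
    pickT k a D f c m pi1 = pickT k a D f c m pi2 := by
  simp only [pickT, h]

/-- The involution. -/
noncomputable def gmap (k a : ℕ) [NeZero k] {r : ℕ} (D : Finset (ZMod k))
    (am : {i : ZMod k // i ≠ 0})
    (x : (Fin r → Finset (ZMod k)) × ({i : ZMod k // i ≠ 0} → Fin r) × Equiv.Perm (ZMod k)) :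
    (Fin r → Finset (ZMod k)) × ({i : ZMod k // i ≠ 0} → Fin r) × Equiv.Perm (ZMod k) :=
  (x.1, x.2.1, x.2.2 * Equiv.swap am.1
    (if x.1 (x.2.1 am) = Finset.univ then 0
     else pickT k a D x.2.1 (x.2.1 am) am.1 x.2.2))

open scoped Classical in
/-- Lemma 12 (`Z = 0`): the signed count of triples `(S,f,π)` in `Ω(N^{a,D})` with
`f(a-1) ≠ f(a)` and `a ∈ H_{f,π,a-1}` is zero. Here `am` and `aa` denote the
elements `a-1` and `a` of `[k-1]`. -/
theorem signed_sum_Z (k r : ℕ) [NeZero k] (hk : 3 ≤ k) (hr : 0 < r) (hrk : r < k)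
    (p : ZMod k → ℕ) (a : ℕ) (ha : 2 ≤ a) (hak : a ≤ k - 1)
    (D : Finset (ZMod k)) (hD : ∀ i ∈ D, 1 ≤ i.val ∧ i.val ≤ a - 2)
    (am aa : {i : ZMod k // i ≠ 0}) (ham : am.1 = (a : ZMod k) - 1)
    (haa : aa.1 = (a : ZMod k)) :
    ∑ x ∈ Finset.univ.filter (fun x : (Fin r → Finset (ZMod k)) ×
          ({i : ZMod k // i ≠ 0} → Fin r) × Equiv.Perm (ZMod k) =>
        SprMem k r p x.1 ∧ Function.Surjective x.2.1 ∧
        (∀ i : ZMod k, 1 ≤ i.val → i.val ≤ a - 2 → x.2.2 i = i) ∧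
        (∀ i : {i : ZMod k // i ≠ 0}, Kset k a D i.1 (x.2.2 i.1) ⊆ x.1 (x.2.1 i)) ∧
        x.2.1 am ≠ x.2.1 aa ∧
        (a : ZMod k) ∈ Hset k a r D x.2.1 x.2.2 am),
      (Equiv.Perm.sign x.2.2 : ℤ) = 0 := by
  
  classical
  haveI : Fact (1 < k) := ⟨by omega⟩
  have hva : ((a : ZMod k)).val = a := ZMod.val_cast_of_lt (by omega)
  have hvm : am.1.val = a - 1 := by
    have e : (a : ZMod k) - 1 = ((a - 1 : ℕ) : ZMod k) := by
      rw [Nat.cast_sub (by omega : 1 ≤ a), Nat.cast_one]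
    rw [ham, e, ZMod.val_cast_of_lt (by omega)]
  have main : ∀ x ∈ (Finset.univ.filter (fun x : (Fin r → Finset (ZMod k)) ×
          ({i : ZMod k // i ≠ 0} → Fin r) × Equiv.Perm (ZMod k) =>
        SprMem k r p x.1 ∧ Function.Surjective x.2.1 ∧
        (∀ i : ZMod k, 1 ≤ i.val → i.val ≤ a - 2 → x.2.2 i = i) ∧
        (∀ i : {i : ZMod k // i ≠ 0}, Kset k a D i.1 (x.2.2 i.1) ⊆ x.1 (x.2.1 i)) ∧
        x.2.1 am ≠ x.2.1 aa ∧
        (a : ZMod k) ∈ Hset k a r D x.2.1 x.2.2 am)),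
      ∃ u : ZMod k, u ≠ am.1 ∧
        gmap k a D am x = (x.1, x.2.1, x.2.2 * Equiv.swap am.1 u) ∧
        gmap k a D am x ∈ (Finset.univ.filter (fun x : (Fin r → Finset (ZMod k)) ×
          ({i : ZMod k // i ≠ 0} → Fin r) × Equiv.Perm (ZMod k) =>
        SprMem k r p x.1 ∧ Function.Surjective x.2.1 ∧
        (∀ i : ZMod k, 1 ≤ i.val → i.val ≤ a - 2 → x.2.2 i = i) ∧
        (∀ i : {i : ZMod k // i ≠ 0}, Kset k a D i.1 (x.2.2 i.1) ⊆ x.1 (x.2.1 i)) ∧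
        x.2.1 am ≠ x.2.1 aa ∧
        (a : ZMod k) ∈ Hset k a r D x.2.1 x.2.2 am)) ∧
        gmap k a D am (gmap k a D am x) = x := by
    rintro ⟨S, f, π⟩ hx
    simp only [Finset.mem_filter, Finset.mem_univ, true_and] at hx
    obtain ⟨hC1, hC2, hC3, hC4, hC5, hC6⟩ := hx
    by_cases hU : S (f am) = Finset.univ
    · -- case S_{f(m)} = univ : swap at (m, 0)
      have hz : (0 : ZMod k) ≠ am.1 := fun h => am.2 h.symm
      have e : gmap k a D am (S, f, π) = (S, f, π * Equiv.swap am.1 0) := by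
        simp only [gmap, if_pos hU]
      refine ⟨0, hz, e, ?_, ?_⟩
      · rw [e, Finset.mem_filter]
        refine ⟨Finset.mem_univ _, hC1, hC2, ?_, ?_, hC5, ?_⟩
        · intro i h1 h2
          have him : i ≠ am.1 := by
            intro h; rw [h, hvm] at h2; omega
          have hi0 : i ≠ 0 := by
            intro h; rw [h, ZMod.val_zero] at h1; omega
          simp only [Equiv.Perm.mul_apply, Equiv.swap_apply_of_ne_of_ne him hi0]
          exact hC3 i h1 h2
        · intro i
          by_cases him : i = am
          · subst him
            simp only [Equiv.Perm.mul_apply, Equiv.swap_apply_left]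
            rw [hU]; exact Finset.subset_univ _
          · have h1 : i.1 ≠ am.1 := fun h => him (Subtype.ext h)
            simp only [Equiv.Perm.mul_apply, Equiv.swap_apply_of_ne_of_ne h1 i.2]
            exact hC4 i
        · have eH : Hset k a r D f (π * Equiv.swap am.1 0) am = Hset k a r D f π am := by
            refine Finset.biUnion_congr rfl ?_
            intro i hi
            simp only [Finset.mem_filter] at hi
            have h1 : i.1 ≠ am.1 := fun h => hi.2.1 (Subtype.ext h)
            rw [Equiv.Perm.mul_apply, Equiv.swap_apply_of_ne_of_ne h1 i.2]
          rw [eH]; exact hC6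
      · rw [e]
        have e2 : gmap k a D am (S, f, π * Equiv.swap am.1 0)
            = (S, f, (π * Equiv.swap am.1 0) * Equiv.swap am.1 0) := by
          simp only [gmap, if_pos hU]
        rw [e2, mul_assoc, Equiv.swap_mul_self, mul_one]
    · -- case S_{f(m)} ≠ univ : swap at (m, t) for the canonical witness t
      have hWne : (Wfin k a D f (f am) am.1 π).Nonempty := by
        rw [Hset, Finset.mem_biUnion] at hC6
        obtain ⟨i, hi, hiK⟩ := hC6
        simp only [Finset.mem_filter, Finset.mem_univ, true_and] at hi
        refine ⟨i.1, ?_⟩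
        simp only [Wfin, Finset.mem_filter, Finset.mem_univ, true_and]
        exact ⟨⟨i.2, hi.2⟩, fun h => hi.1 (Subtype.ext h), hiK⟩
      set t := pickT k a D f (f am) am.1 π with htdef
      have htW := pickT_mem hWne
      simp only [Wfin, Finset.mem_filter, Finset.mem_univ, true_and, ← htdef] at htW
      obtain ⟨⟨ht0, htf⟩, htm, htK⟩ := htW
      -- t ≠ a
      have htA : t ≠ (a : ZMod k) := by
        intro h
        have hts : (⟨t, ht0⟩ : {i : ZMod k // i ≠ 0}) = aa := Subtype.ext (h.trans haa.symm)
        rw [hts] at htf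
        exact hC5 htf.symm
      have hd1 : 1 ≤ ((a : ZMod k) - t).val := by
        have hne : (a : ZMod k) - t ≠ 0 := sub_ne_zero.mpr (Ne.symm htA)
        have := (ZMod.val_eq_zero ((a : ZMod k) - t)).not.mpr hne
        omega
      have hdlt := ZMod.val_lt ((a : ZMod k) - t)
      -- π t ≠ t
      have hF1 : π t ≠ t := by
        intro h
        have h4 := hC4 ⟨t, ht0⟩
        rw [h] at htK h4
        rw [Kset, if_pos rfl] at htK h4
        by_cases hc2 : t.val + 1 = a ∨ t ∈ D
        · rw [if_pos hc2, htf] at h4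
          exact hU (Finset.univ_subset_iff.mp h4)
        · rw [if_neg hc2] at htK
          exact Finset.notMem_empty _ htK
      have hKt : Kset k a D t (π t) = cyc k t (π t) := by
        rw [Kset, if_neg (fun h => hF1 h.symm)]
      rw [hKt] at htK
      have hd2 : ((a : ZMod k) - t).val ≤ (π t - t).val := (mem_cyc.mp htK).2
      -- value of m - t and t - m
      have hmt_eq : am.1 - t = ((a : ZMod k) - t) - 1 := by rw [ham]; ring
      have hvmt : (am.1 - t).val = ((a : ZMod k) - t).val - 1 := by
        rw [hmt_eq, zval_sub (by rw [ZMod.val_one]; exact hd1), ZMod.val_one]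
      have hd2' : 2 ≤ ((a : ZMod k) - t).val := by
        have hne : am.1 - t ≠ 0 := sub_ne_zero.mpr (fun h => htm h.symm)
        have := (ZMod.val_eq_zero (am.1 - t)).not.mpr hne
        omega
      have hvtm : (t - am.1).val = k - (((a : ZMod k) - t).val - 1) := by
        have e : t - am.1 = -(am.1 - t) := by ring
        rw [e, ZMod.neg_val, if_neg (sub_ne_zero.mpr (fun h => htm h.symm)), hvmt]
      -- π m ≠ m
      have hF2 : π am.1 ≠ am.1 := by
        intro h
        have h4 := hC4 am
        rw [h, Kset, if_pos rfl, if_pos (Or.inl (by rw [hvm]; omega))] at h4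
        exact hU (Finset.univ_subset_iff.mp h4)
      have hKm : Kset k a D am.1 (π am.1) = cyc k am.1 (π am.1) := by
        rw [Kset, if_neg (fun h => hF2 h.symm)]
      have hCm : cyc k am.1 (π am.1) ⊆ S (f am) := by
        have := hC4 am; rw [hKm] at this; exact this
      have hCt : cyc k t (π t) ⊆ S (f am) := by
        have := hC4 ⟨t, ht0⟩; rw [hKt, htf] at this; exact this
      have hP1 : 1 ≤ (π am.1 - am.1).val := by
        have hne : π am.1 - am.1 ≠ 0 := sub_ne_zero.mpr hF2
        have := (ZMod.val_eq_zero (π am.1 - am.1)).not.mpr hne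
        omega
      have hPlt := ZMod.val_lt (π am.1 - am.1)
      -- the core non-wrapping fact
      have hCORE : ¬ ((t - am.1).val ≤ (π am.1 - am.1).val) := by
        intro hle
        apply hU
        rw [Finset.eq_univ_iff_forall]
        intro y
        by_cases hy0 : (y - t).val = 0
        · have hyt : y = t := sub_eq_zero.mp ((ZMod.val_eq_zero _).mp hy0)
          subst hyt
          apply hCm
          rw [mem_cyc]
          refine ⟨?_, hle⟩
          rw [hvtm]; omega
        · by_cases hyd : (y - t).val ≤ ((a : ZMod k) - t).val
          · exact hCt (mem_cyc.mpr ⟨by omega, le_trans hyd hd2⟩)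
          · apply hCm
            rw [mem_cyc]
            have e : y - am.1 = (y - t) - (am.1 - t) := by ring
            have hv : (y - am.1).val = (y - t).val - (((a : ZMod k) - t).val - 1) := by
              rw [e, zval_sub (by omega), hvmt]
            have hylt := ZMod.val_lt (y - t)
            constructor <;> omega
      have hF4 : π am.1 ≠ t := by
        intro h; exact hCORE (by rw [h])
      -- value of π m - t
      have hQ : (π am.1 - t).val = (π am.1 - am.1).val + (((a : ZMod k) - t).val - 1) := by
        have esum : π am.1 - t = (π am.1 - am.1) + (am.1 - t) := by ring
        rw [esum, ZMod.val_add, hvmt]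
        have hwrap : (π am.1 - am.1).val + (((a : ZMod k) - t).val - 1) < k := by
          by_contra hge
          exact hCORE (by rw [hvtm]; omega)
        exact Nat.mod_eq_of_lt hwrap
      have hG2 : (a : ZMod k) ∈ cyc k t (π am.1) := by
        rw [mem_cyc]
        exact ⟨hd1, by rw [hQ]; omega⟩
      have hG3 : cyc k t (π am.1) ⊆ S (f am) := by
        intro y hy
        rw [mem_cyc] at hy
        obtain ⟨hy1, hy2⟩ := hy
        rw [hQ] at hy2
        by_cases hyd : (y - t).val ≤ ((a : ZMod k) - t).val
        · exact hCt (mem_cyc.mpr ⟨hy1, le_trans hyd hd2⟩)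
        · apply hCm
          rw [mem_cyc]
          have e : y - am.1 = (y - t) - (am.1 - t) := by ring
          have hv : (y - am.1).val = (y - t).val - (((a : ZMod k) - t).val - 1) := by
            rw [e, zval_sub (by omega), hvmt]
          constructor <;> omega
      have hG1 : cyc k am.1 (π t) ⊆ S (f am) :=
        le_trans (cyc_suffix (by rw [hvmt]; omega)) hCt
      have hF3 : π t ≠ am.1 := by
        intro h
        rw [h, hvmt] at hd2
        omega
      -- assemble
      have e : gmap k a D am (S, f, π) = (S, f, π * Equiv.swap am.1 t) := by
        simp only [gmap, if_neg hU, ← htdef]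
      refine ⟨t, htm, e, ?_, ?_⟩
      · rw [e, Finset.mem_filter]
        refine ⟨Finset.mem_univ _, hC1, hC2, ?_, ?_, hC5, ?_⟩
        · intro i h1 h2
          have him : i ≠ am.1 := by
            intro h; rw [h, hvm] at h2; omega
          have hit : i ≠ t := by
            intro h
            exact hF1 (by rw [← h]; exact hC3 i h1 h2)
          simp only [Equiv.Perm.mul_apply, Equiv.swap_apply_of_ne_of_ne him hit]
          exact hC3 i h1 h2
        · intro i
          by_cases him : i = am
          · subst him
            simp only [Equiv.Perm.mul_apply, Equiv.swap_apply_left]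
            rw [Kset, if_neg (fun h => hF3 h.symm)]
            exact hG1
          · by_cases hit : i.1 = t
            · have hi : i = ⟨t, ht0⟩ := Subtype.ext hit
              subst hi
              simp only [Equiv.Perm.mul_apply, Equiv.swap_apply_right]
              rw [Kset, if_neg (fun h => hF4 h.symm), htf]
              exact hG3
            · have h1 : i.1 ≠ am.1 := fun h => him (Subtype.ext h)
              simp only [Equiv.Perm.mul_apply, Equiv.swap_apply_of_ne_of_ne h1 hit]
              exact hC4 i
        · rw [Hset, Finset.mem_biUnion]
          refine ⟨⟨t, ht0⟩, ?_, ?_⟩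
          · simp only [Finset.mem_filter, Finset.mem_univ, true_and]
            exact ⟨fun h => htm (congrArg Subtype.val h), htf⟩
          · simp only [Equiv.Perm.mul_apply, Equiv.swap_apply_right]
            rw [Kset, if_neg (fun h => hF4 h.symm)]
            exact hG2
      · rw [e]
        have hW' : Wfin k a D f (f am) am.1 (π * Equiv.swap am.1 t)
            = Wfin k a D f (f am) am.1 π := by
          ext i
          simp only [Wfin, Finset.mem_filter, Finset.mem_univ, true_and]
          by_cases him : i = am.1
          · constructor <;> (rintro ⟨_, hne, _⟩; exact absurd him hne)
          · by_cases hit : i = t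
            · subst hit
              constructor
              · rintro _; exact ⟨⟨ht0, htf⟩, htm, by rw [hKt]; exact htK⟩
              · rintro _
                refine ⟨⟨ht0, htf⟩, htm, ?_⟩
                simp only [Equiv.Perm.mul_apply, Equiv.swap_apply_right]
                rw [Kset, if_neg (fun h => hF4 h.symm)]
                exact hG2
            · simp only [Equiv.Perm.mul_apply, Equiv.swap_apply_of_ne_of_ne him hit]
        have ept : pickT k a D f (f am) am.1 (π * Equiv.swap am.1 t) = t :=
          (pickT_congr hW').trans htdef.symm
        have e2 : gmap k a D am (S, f, π * Equiv.swap am.1 t)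
            = (S, f, (π * Equiv.swap am.1 t) * Equiv.swap am.1 t) := by
          simp only [gmap, if_neg hU, ept]
        rw [e2, mul_assoc, Equiv.swap_mul_self, mul_one]
  refine Finset.sum_involution (fun x _ => gmap k a D am x) ?_ ?_
    (fun x hx => (by obtain ⟨_, _, _, hmem, _⟩ := main x hx; exact hmem)) ?_
  · intro x hx
    obtain ⟨u, hu, hgx, _, _⟩ := main x hx
    simp only [hgx]
    rw [map_mul, Equiv.Perm.sign_swap (fun h => hu h.symm)]
    push_cast
    ring
  · intro x hx _
    obtain ⟨u, hu, hgx, _, _⟩ := main x hx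
    simp only [hgx]
    intro hEq
    have h4 : x.2.2 * Equiv.swap am.1 u = x.2.2 := congrArg (fun y => y.2.2) hEq
    have h5 : Equiv.swap am.1 u = 1 := by
      have := mul_left_cancel (a := x.2.2) (b := Equiv.swap am.1 u) (c := 1)
        (by rw [h4, mul_one])
      exact this
    have h6 := congrArg (fun e : Equiv.Perm (ZMod k) => e am.1) h5
    simp only [Equiv.swap_apply_left, Equiv.Perm.one_apply] at h6
    exact hu h6
  · intro x hx
    obtain ⟨_, _, _, _, hinv⟩ := main x hx
    exact hinv
end

section
/- Let k and r be positive integers with r < k and let p = (p_1,…,p_k) be a tuple of non-negative integers with S_{p,r} non-empty. Then the probability, for (S,f) uniform on Ω, of the event { for all i∈[k−1], S_{f(i)} ≠ [k], and k ∉ S_{f(k−1)} } equals (|M_{p,r}| / |S_{p,r}|) · (1 − p_k/r). -/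
open Finset

private lemma swapFiber {α : Type*} {r : ℕ} (e : α) (i j : Fin r) :
    Nat.card {f : α → Fin r // Function.Surjective f ∧ f e = i}
      = Nat.card {f : α → Fin r // Function.Surjective f ∧ f e = j} :=
  Nat.card_congr
    { toFun := fun g => ⟨Equiv.swap i j ∘ g.1, (Equiv.swap i j).surjective.comp g.2.1, by
        simp [g.2.2]⟩
      invFun := fun g => ⟨Equiv.swap i j ∘ g.1, (Equiv.swap i j).surjective.comp g.2.1, by
        simp [g.2.2]⟩
      left_inv := fun g => by ext x; simp
      right_inv := fun g => by ext x; simp }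

private lemma card_fiber_sum {α β : Type*} [Finite α] [Fintype β] (v : α → β) (q : α → Prop) :
    Nat.card {a // q a} = ∑ b : β, Nat.card {a // q a ∧ v a = b} := by
  classical
  have := Fintype.ofFinite α
  rw [← Nat.card_congr ((Equiv.sigmaFiberEquiv (fun x : {a // q a} => v x.1)).trans (Equiv.refl _))]
  rw [Nat.card_eq_fintype_card, Fintype.card_sigma]
  refine Finset.sum_congr rfl fun b _ => ?_
  rw [← Nat.card_eq_fintype_card]
  exact Nat.card_congr (Equiv.subtypeSubtypeEquivSubtypeInter q (fun a => v a = b))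

private lemma count_surj_cond {α : Type*} [Finite α] {r : ℕ} (e : α) (i0 : Fin r)
    (t : Fin r → Prop) :
    Nat.card {f : α → Fin r // Function.Surjective f ∧ t (f e)}
      = Nat.card {i : Fin r // t i} *
        Nat.card {f : α → Fin r // Function.Surjective f ∧ f e = i0} := by
  classical
  have := Fintype.ofFinite α
  rw [card_fiber_sum (fun f : α → Fin r => f e) (fun f => Function.Surjective f ∧ t (f e))]
  have h : ∀ b : Fin r,
      Nat.card {f : α → Fin r // (Function.Surjective f ∧ t (f e)) ∧ f e = b}
        = if t b then Nat.card {f : α → Fin r // Function.Surjective f ∧ f e = i0} else 0 := by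
    intro b
    split_ifs with hb
    · rw [← swapFiber e b i0]
      exact Nat.card_congr (Equiv.subtypeEquivRight fun f => by
        constructor
        · rintro ⟨⟨h1, _⟩, h3⟩; exact ⟨h1, h3⟩
        · rintro ⟨h1, h3⟩; exact ⟨⟨h1, h3 ▸ hb⟩, h3⟩)
    · have : IsEmpty {f : α → Fin r // (Function.Surjective f ∧ t (f e)) ∧ f e = b} :=
        ⟨fun f => hb (f.2.2 ▸ f.2.1.2)⟩
      exact Nat.card_of_isEmpty
  simp only [h]
  rw [← Finset.sum_filter, Finset.sum_const, smul_eq_mul]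
  congr 1
  rw [Nat.card_eq_fintype_card, Fintype.card_subtype]

/-- Lemma 7 (end of proof): for `(S,f)` uniform on `Ω`, the probability of the event
"for all `i ∈ [k-1]`, `S_{f(i)} ≠ [k]`, and `k ∉ S_{f(k-1)}`" equals
`(|ℳ_{p,r}| / |𝒮_{p,r}|) · (1 - p_k / r)`. Here `e` denotes the element `k-1`
of `[k-1]` (i.e. `-1 : ZMod k`) and `0 : ZMod k` represents the element `k`. -/
theorem prob_proper_and_not_mem (k r : ℕ) [NeZero k] (hr : 0 < r) (hrk : r < k)
    (p : ZMod k → ℕ)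
    (hS : Nonempty {S : Fin r → Finset (ZMod k) // SprMem k r p S})
    (e : {i : ZMod k // i ≠ 0}) (he : e.1 = -1) :
    PrU {om : OmS k r p |
        (∀ i : {i : ZMod k // i ≠ 0}, om.1.1 (om.1.2 i) ≠ Finset.univ) ∧
        (0 : ZMod k) ∉ om.1.1 (om.1.2 e)} =
    ((Mcard k r p : ℚ) / (Scard k r p : ℚ)) * (1 - (p 0 : ℚ) / (r : ℚ)) := by
  classical
  set i0 : Fin r := ⟨0, hr⟩ with hi0
  set c := Nat.card {f : {i : ZMod k // i ≠ 0} → Fin r //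
    Function.Surjective f ∧ f e = i0} with hc
  -- positivity of c
  have hcardG : r ≤ Fintype.card {i : ZMod k // i ≠ 0} := by
    have h1 : Fintype.card {i : ZMod k // i ≠ 0} = k - 1 := by
      simp only [ne_eq]
      rw [Fintype.card_subtype_compl, Fintype.card_subtype_eq, ZMod.card]
    exact le_trans (Nat.le_pred_of_lt hrk) h1.ge
  have hcpos : c ≠ 0 := by
    obtain ⟨φ⟩ : Nonempty (Fin r ↪ {i : ZMod k // i ≠ 0}) :=
      Function.Embedding.nonempty_of_card_le (by simpa using hcardG)
    have hne : Nonempty (Fin r) := ⟨i0⟩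
    have hsurj : Function.Surjective (Function.invFun φ) :=
      Function.invFun_surjective φ.injective
    refine Nat.card_ne_zero.2 ⟨⟨⟨Equiv.swap (Function.invFun φ e) i0 ∘ Function.invFun φ,
      (Equiv.swap _ _).surjective.comp hsurj, by simp⟩⟩, by infer_instance⟩
  have hSne : (Scard k r p : ℚ) ≠ 0 := by
    have : Scard k r p ≠ 0 := Nat.card_ne_zero.2 ⟨hS, by infer_instance⟩
    exact_mod_cast Nat.cast_ne_zero.2 this
  have hrne : (r : ℚ) ≠ 0 := Nat.cast_ne_zero.2 hr.ne'
  have hcne : (c : ℚ) ≠ 0 := Nat.cast_ne_zero.2 hcpos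
  -- p 0 ≤ r
  have hp0 : p 0 ≤ r := by
    obtain ⟨S0⟩ := hS
    have h1 := S0.2 0
    rw [← h1, Nat.card_eq_fintype_card]
    simpa using Fintype.card_subtype_le (fun i : Fin r => (0 : ZMod k) ∈ S0.1 i)
  -- cardinality of the sample space
  have hOm : Nat.card (OmS k r p) = Scard k r p * (r * c) := by
    rw [Nat.card_congr (Equiv.subtypeProdEquivProd
      (p := SprMem k r p)
      (q := fun f : {i : ZMod k // i ≠ 0} → Fin r => Function.Surjective f)),
      Nat.card_prod, Scard]
    congr 1
    rw [card_fiber_sum (fun f : {i : ZMod k // i ≠ 0} → Fin r => f e)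
      (fun f => Function.Surjective f)]
    rw [Finset.sum_congr rfl (fun b _ => swapFiber e b i0), Finset.sum_const, smul_eq_mul,
      Finset.card_fin]
  -- cardinality of the event
  have eqA : {om : OmS k r p |
        (∀ i : {i : ZMod k // i ≠ 0}, om.1.1 (om.1.2 i) ≠ Finset.univ) ∧
        (0 : ZMod k) ∉ om.1.1 (om.1.2 e)} ≃
      Σ S : {S : Fin r → Finset (ZMod k) // MprMem k r p S},
        {f : {i : ZMod k // i ≠ 0} → Fin r //
          Function.Surjective f ∧ (0 : ZMod k) ∉ S.1 (f e)} :=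
    { toFun := fun om =>
        ⟨⟨om.1.1.1, om.1.2.1, fun j => by
            obtain ⟨i, hi⟩ := om.1.2.2 j
            exact hi ▸ om.2.1 i⟩,
          ⟨om.1.1.2, om.1.2.2, om.2.2⟩⟩
      invFun := fun x => ⟨⟨⟨x.1.1, x.2.1⟩, ⟨x.1.2.1, x.2.2.1⟩⟩, ⟨fun i => x.1.2.2 _, x.2.2.2⟩⟩
      left_inv := fun _ => rfl
      right_inv := fun _ => rfl }
  have hA : Nat.card {om : OmS k r p |
        (∀ i : {i : ZMod k // i ≠ 0}, om.1.1 (om.1.2 i) ≠ Finset.univ) ∧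
        (0 : ZMod k) ∉ om.1.1 (om.1.2 e)}
      = Mcard k r p * ((r - p 0) * c) := by
    rw [Nat.card_congr eqA, Nat.card_eq_fintype_card, Fintype.card_sigma]
    have key : ∀ S : {S : Fin r → Finset (ZMod k) // MprMem k r p S},
        Fintype.card {f : {i : ZMod k // i ≠ 0} → Fin r //
          Function.Surjective f ∧ (0 : ZMod k) ∉ S.1 (f e)}
          = (r - p 0) * c := by
      intro S
      rw [← Nat.card_eq_fintype_card,
        count_surj_cond e i0 (fun i => (0 : ZMod k) ∉ S.1 i), ← hc]
      congr 1
      rw [Nat.card_eq_fintype_card, Fintype.card_subtype_compl, Fintype.card_fin,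
        ← Nat.card_eq_fintype_card, S.2.1 0]
    rw [Finset.sum_congr rfl (fun S _ => key S), Finset.sum_const, smul_eq_mul,
      Finset.card_univ, ← Nat.card_eq_fintype_card, Mcard]
  rw [PrU, hA, hOm]
  rw [Nat.cast_mul, Nat.cast_mul, Nat.cast_mul, Nat.cast_mul, Nat.cast_sub hp0]
  field_simp
end

section
/- Let k ≥ 2 and r be positive integers with r < k and let p = (p_1,…,p_k) be a tuple of non-negative integers with S_{p,r} non-empty. Then the probability, for (S,f) uniform on Ω, of the event { S_{f(1)} = {2,3,…,k} and S_{f(i)} ≠ [k] for all i∈[k−1] } equals |M_{q,r−1}| / |S_{p,r}|, where q = (p_1, p_2−1, p_3−1, …, p_k−1) (with M_{q,r−1} empty if some entry of q is negative). -/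
open Finset

section AuxCount

open Function

private lemma card_mem_eq_sum' {r : ℕ} (P : Fin r → Prop) [DecidablePred P] :
    Nat.card {i : Fin r // P i} = ∑ i, if P i then 1 else 0 := by
  rw [Nat.card_eq_fintype_card, Fintype.card_subtype, Finset.card_filter]

private lemma fib_card_eq' {m : ℕ} {D : Type} (e1 : D) (t t' : Fin (m + 1)) :
    Nat.card {f : D → Fin (m + 1) // Surjective f ∧ f e1 = t} =
      Nat.card {f : D → Fin (m + 1) // Surjective f ∧ f e1 = t'} := by
  refine Nat.card_congr ⟨fun x => ⟨Equiv.swap t t' ∘ x.1,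
      (Equiv.swap t t').surjective.comp x.2.1, by simp [x.2.2]⟩,
    fun x => ⟨Equiv.swap t t' ∘ x.1, (Equiv.swap t t').surjective.comp x.2.1,
      by simp [x.2.2, Equiv.swap_apply_right]⟩,
    fun x => Subtype.ext (by funext a; simp), fun x => Subtype.ext (by funext a; simp)⟩

end AuxCount

set_option maxHeartbeats 1000000 in
/-- Lemma 14 (end of proof): for `(S,f)` uniform on `Ω`, the probability of the event
"`S_{f(1)} = {2,3,…,k}` and `S_{f(i)} ≠ [k]` for all `i ∈ [k-1]`" equals
`|ℳ_{q,r-1}| / |𝒮_{p,r}|`, where `q = (p_1, p_2 - 1, …, p_k - 1)`. Here `e1`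
denotes the element `1` of `[k-1]`, and `{2,…,k}` is `[k] ∖ {1}`. -/
theorem prob_Sf1_eq_compl_one (k r : ℕ) [NeZero k] (hk : 2 ≤ k) (hr : 0 < r) (hrk : r < k)
    (p : ZMod k → ℕ)
    (hS : Nonempty {S : Fin r → Finset (ZMod k) // SprMem k r p S})
    (e1 : {i : ZMod k // i ≠ 0}) (he1 : e1.1 = 1) :
    PrU {om : OmS k r p |
        om.1.1 (om.1.2 e1) = Finset.univ \ {(1 : ZMod k)} ∧
        ∀ i : {i : ZMod k // i ≠ 0}, om.1.1 (om.1.2 i) ≠ Finset.univ} =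
    (McardZ k (r - 1) (fun j => if j = 1 then (p j : ℤ) else (p j : ℤ) - 1) : ℚ) /
      (Scard k r p : ℚ) := by
  classical
  obtain ⟨m, rfl⟩ : ∃ m, r = m + 1 := ⟨r - 1, (Nat.succ_pred_eq_of_pos hr).symm⟩
  set U1 : Finset (ZMod k) := Finset.univ \ {1} with hU1def
  have hU1mem : ∀ j : ZMod k, (j ∈ U1 ↔ j ≠ 1) := by intro j; simp [hU1def]
  have hU1ne : U1 ≠ Finset.univ := by
    intro h
    have h1 : (1 : ZMod k) ∈ U1 := h ▸ Finset.mem_univ 1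
    rw [hU1mem] at h1
    exact h1 rfl
  -- the condition defining `ℳ_{q,m}`
  set condM : (Fin m → Finset (ZMod k)) → Prop := fun T =>
    (∀ j : ZMod k, (Nat.card {i : Fin m // j ∈ T i} : ℤ) =
      if j = 1 then (p j : ℤ) else (p j : ℤ) - 1) ∧ ∀ i, T i ≠ Finset.univ with hcondM
  -- counting key
  have key : ∀ (t : Fin (m + 1)) (S : Fin (m + 1) → Finset (ZMod k)) (j : ZMod k),
      Nat.card {i : Fin (m + 1) // j ∈ S i} =
        (if j ∈ S t then 1 else 0) + Nat.card {i : Fin m // j ∈ S (t.succAbove i)} := by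
    intro t S j
    rw [card_mem_eq_sum' (fun i => j ∈ S i), card_mem_eq_sum' (fun i => j ∈ S (t.succAbove i))]
    exact Fin.sum_univ_succAbove _ t
  -- transfer of membership conditions under deletion of index t
  have transfer : ∀ (t : Fin (m + 1)) (S : Fin (m + 1) → Finset (ZMod k)), S t = U1 →
      (MprMem k (m + 1) p S ↔ condM (fun i => S (t.succAbove i))) := by
    intro t S hSt
    have hmem : ∀ j : ZMod k, (j ∈ S t ↔ j ≠ 1) := by
      intro j; rw [hSt]; exact hU1mem j
    constructor
    · rintro ⟨h1, h2⟩
      refine ⟨?_, fun i => h2 _⟩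
      intro j
      show (Nat.card {i : Fin m // j ∈ S (t.succAbove i)} : ℤ) =
        if j = 1 then (p j : ℤ) else (p j : ℤ) - 1
      have hk1 := key t S j
      rw [h1 j] at hk1
      by_cases hj : j = 1
      · rw [if_neg (fun h => (hmem j).mp h hj)] at hk1
        rw [if_pos hj]
        omega
      · rw [if_pos ((hmem j).mpr hj)] at hk1
        rw [if_neg hj]
        omega
    · rintro ⟨h1, h2⟩
      constructor
      · intro j
        have hk1 := key t S j
        have hz : (Nat.card {i : Fin m // j ∈ S (t.succAbove i)} : ℤ) =
            if j = 1 then (p j : ℤ) else (p j : ℤ) - 1 := h1 j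
        by_cases hj : j = 1
        · rw [if_pos hj] at hz
          rw [if_neg (fun h => (hmem j).mp h hj)] at hk1
          omega
        · rw [if_neg hj] at hz
          rw [if_pos ((hmem j).mpr hj)] at hk1
          omega
      · intro i
        by_cases hi : i = t
        · rw [hi, hSt]; exact hU1ne
        · obtain ⟨z, hz⟩ := Fin.exists_succAbove_eq hi
          rw [← hz]
          exact h2 z
  -- members of ℳ_{p,m+1} with a distinguished index at U1
  set Y := {y : (Fin (m + 1) → Finset (ZMod k)) × Fin (m + 1) //
    MprMem k (m + 1) p y.1 ∧ y.1 y.2 = U1} with hY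
  have hrm : ∀ (t : Fin (m + 1)) (T : Fin m → Finset (ZMod k)),
      (fun i => (Fin.insertNth (α := fun _ => Finset (ZMod k)) t U1 T) (t.succAbove i)) = T :=
    fun t T => funext fun i => by simp
  -- Y ≃ Fin (m+1) × ℳ_{q,m}
  have eY : Y ≃ Fin (m + 1) × {T : Fin m → Finset (ZMod k) // condM T} := by
    refine ⟨fun y => ⟨y.1.2, ⟨fun i => y.1.1 (y.1.2.succAbove i),
        (transfer y.1.2 y.1.1 y.2.2).mp y.2.1⟩⟩,
      fun z => ⟨(Fin.insertNth (α := fun _ => Finset (ZMod k)) z.1 U1 z.2.1, z.1),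
        (transfer z.1 _ (Fin.insertNth_apply_same (α := fun _ => Finset (ZMod k)) z.1 U1 z.2.1)).mpr
          (by rw [hrm z.1 z.2.1]; exact z.2.2),
        Fin.insertNth_apply_same (α := fun _ => Finset (ZMod k)) z.1 U1 z.2.1⟩, ?_, ?_⟩
    · rintro ⟨⟨S, t⟩, hM, hU⟩
      refine Subtype.ext (Prod.ext ?_ rfl)
      show Fin.insertNth (α := fun _ => Finset (ZMod k)) t U1 (fun i => S (t.succAbove i)) = S
      rw [← hU]
      exact Fin.insertNth_self_removeNth (α := fun _ => Finset (ZMod k)) t S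
    · rintro ⟨t, T, hT⟩
      refine Prod.ext rfl (Subtype.ext ?_)
      exact hrm t T
  -- the common fiber cardinality
  obtain ⟨c, hc⟩ : ∃ c : ℕ, c = Nat.card
      {f : {i : ZMod k // i ≠ 0} → Fin (m + 1) // Function.Surjective f ∧ f e1 = 0} := ⟨_, rfl⟩
  have hfibc : ∀ t : Fin (m + 1),
      Nat.card {f : {i : ZMod k // i ≠ 0} → Fin (m + 1) // Function.Surjective f ∧ f e1 = t} = c :=
    fun t => (fib_card_eq' e1 t 0).trans hc.symm
  clear hc
  -- main equivalence for the event
  have e_main : {om : OmS k (m + 1) p //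
      om.1.1 (om.1.2 e1) = U1 ∧ ∀ i : {i : ZMod k // i ≠ 0}, om.1.1 (om.1.2 i) ≠ Finset.univ} ≃
      Σ y : Y, {f : {i : ZMod k // i ≠ 0} → Fin (m + 1) // Function.Surjective f ∧ f e1 = y.1.2} := by
    refine ⟨fun x => ⟨⟨(x.1.1.1, x.1.1.2 e1), ⟨⟨x.1.2.1, fun t => ?_⟩, x.2.1⟩⟩,
        ⟨x.1.1.2, x.1.2.2, rfl⟩⟩,
      fun y => ⟨⟨(y.1.1.1, y.2.1), ⟨y.1.2.1.1, y.2.2.1⟩⟩,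
        ⟨by show y.1.1.1 (y.2.1 e1) = U1; rw [y.2.2.2]; exact y.1.2.2, fun i => y.1.2.1.2 _⟩⟩, ?_, ?_⟩
    · obtain ⟨i, hi⟩ := x.1.2.2 t
      exact hi ▸ x.2.2 i
    · intro x
      exact Subtype.ext (Subtype.ext rfl)
    · rintro ⟨⟨⟨S, t⟩, hY0⟩, f, hs, hfe⟩
      change f e1 = t at hfe
      subst hfe
      rfl
  -- equivalence for surjections
  have e_surj : {f : {i : ZMod k // i ≠ 0} → Fin (m + 1) // Function.Surjective f} ≃
      Σ t : Fin (m + 1), {f : {i : ZMod k // i ≠ 0} → Fin (m + 1) // Function.Surjective f ∧ f e1 = t} :=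
    ((Equiv.sigmaFiberEquiv
        (fun x : {f : {i : ZMod k // i ≠ 0} → Fin (m + 1) // Function.Surjective f} => x.1 e1)).symm.trans
      (Equiv.sigmaCongrRight fun t => Equiv.subtypeSubtypeEquivSubtypeInter (fun f : {i : ZMod k // i ≠ 0} → Fin (m + 1) => Function.Surjective f) (fun f => f e1 = t)))
  obtain ⟨NS, hNS⟩ : ∃ n : ℕ, n = Nat.card
      {f : {i : ZMod k // i ≠ 0} → Fin (m + 1) // Function.Surjective f} := ⟨_, rfl⟩
  have hNSval : NS = (m + 1) * c := by
    rw [hNS, Nat.card_congr e_surj, Nat.card_eq_fintype_card, Fintype.card_sigma]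
    have h1 : ∀ t : Fin (m + 1),
        Fintype.card {f : {i : ZMod k // i ≠ 0} → Fin (m + 1) // Function.Surjective f ∧ f e1 = t} = c := fun t => by
      rw [← Nat.card_eq_fintype_card]; exact hfibc t
    rw [Finset.sum_congr rfl (fun t _ => h1 t), Finset.sum_const, smul_eq_mul,
      Finset.card_univ, Fintype.card_fin]
  -- existence of a surjection, hence c > 0
  have hcpos : 0 < c := by
    have hnz : ∀ i : Fin (m + 1), ((i.1 + 1 : ℕ) : ZMod k) ≠ 0 := by
      intro i h
      have hv := ZMod.val_cast_of_lt (show i.1 + 1 < k by omega)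
      rw [h, ZMod.val_zero] at hv
      omega
    have hg : ∃ g : Fin (m + 1) → {i : ZMod k // i ≠ 0}, Function.Injective g := by
      refine ⟨fun i => ⟨((i.1 + 1 : ℕ) : ZMod k), hnz i⟩, ?_⟩
      intro i j h
      have hi := ZMod.val_cast_of_lt (show i.1 + 1 < k by omega)
      have hj := ZMod.val_cast_of_lt (show j.1 + 1 < k by omega)
      have h2 : ((i.1 + 1 : ℕ) : ZMod k) = ((j.1 + 1 : ℕ) : ZMod k) :=
        congrArg Subtype.val h
      have h3 := congrArg ZMod.val h2
      rw [hi, hj] at h3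
      exact Fin.ext (by omega)
    obtain ⟨g, hg⟩ := hg
    have hne : Nonempty {f : {i : ZMod k // i ≠ 0} → Fin (m + 1) // Function.Surjective f} :=
      ⟨⟨Function.invFun g, Function.invFun_surjective hg⟩⟩
    have hNSpos : 0 < NS := by rw [hNS]; exact Nat.card_pos
    rw [hNSval] at hNSpos
    exact Nat.pos_of_ne_zero fun h => by simp [h] at hNSpos
  -- cardinality of Ω
  have hOm : Nat.card (OmS k (m + 1) p) = Scard k (m + 1) p * NS := by
    rw [Nat.card_congr (Equiv.subtypeProdEquivProd), Nat.card_prod, hNS]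
    rfl
  -- cardinality of the event
  have hEcard : Nat.card {om : OmS k (m + 1) p //
      om.1.1 (om.1.2 e1) = U1 ∧ ∀ i : {i : ZMod k // i ≠ 0}, om.1.1 (om.1.2 i) ≠ Finset.univ} =
      Nat.card Y * c := by
    rw [Nat.card_congr e_main, Nat.card_eq_fintype_card, Fintype.card_sigma]
    have h1 : ∀ y : Y,
        Fintype.card {f : {i : ZMod k // i ≠ 0} → Fin (m + 1) // Function.Surjective f ∧ f e1 = y.1.2} = c :=
      fun y => by rw [← Nat.card_eq_fintype_card]; exact hfibc y.1.2
    rw [Finset.sum_congr rfl (fun y _ => h1 y), Finset.sum_const, smul_eq_mul,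
      Finset.card_univ, Nat.card_eq_fintype_card]
  have hYcard : Nat.card Y = (m + 1) * Nat.card {T : Fin m → Finset (ZMod k) // condM T} := by
    rw [Nat.card_congr eY, Nat.card_prod, Nat.card_eq_fintype_card (α := Fin (m + 1)),
      Fintype.card_fin]
  -- McardZ identification
  have hMq : McardZ k (m + 1 - 1) (fun j => if j = 1 then (p j : ℤ) else (p j : ℤ) - 1) =
      Nat.card {T : Fin m → Finset (ZMod k) // condM T} := by
    simp only [Nat.add_sub_cancel]
    rfl
  -- positivity of Scard
  have hScpos : 0 < Scard k (m + 1) p := by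
    haveI := hS
    exact Nat.card_pos
  -- put everything together
  unfold PrU
  rw [Set.coe_setOf]
  rw [hEcard, hOm, hYcard, hMq, hNSval]
  have hcne : (c : ℚ) ≠ 0 := Nat.cast_ne_zero.mpr (by omega)
  have hSne : (Scard k (m + 1) p : ℚ) ≠ 0 := Nat.cast_ne_zero.mpr (by omega)
  push_cast
  field_simp
end

section
/- Let k and r be positive integers with r < k and let p = (p_1,…,p_k) be a tuple of non-negative integers with S_{p,r} non-empty. Let D ⊆ [k−1] be a subset containing some integer a > 1 with a−1 ∉ D, and for i∈[k−1] set c_i = i−1 if i∈D and c_i = i otherwise. Then Σ_{π∈𝔖_k} sgn(π) · Pr( ∩_{i∈[k−1]} J^{f(i)}_{c_i, π(i)+1} ) = 0, all subscripts taken cyclically modulo k (in particular J^t_{0,j} means J^t_{k,j} and π(i)+1 is taken modulo k). -/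
open Finset

/-- Claim of Section 5.3: if `D ⊆ [k-1]` contains an integer `a > 1` but not `a - 1`,
then `Σ_{π ∈ 𝔖_k} sgn(π) · Pr(∩_{i ∈ [k-1]} J^{f(i)}_{c_i, π(i)+1}) = 0`, where
`c_i = i - 1` if `i ∈ D` and `c_i = i` otherwise (cyclically modulo `k`). -/
theorem signed_sum_Mgamma_D (k r : ℕ) [NeZero k] (hr : 0 < r) (hrk : r < k)
    (p : ZMod k → ℕ)
    (hS : Nonempty {S : Fin r → Finset (ZMod k) // SprMem k r p S})
    (D : Finset {i : ZMod k // i ≠ 0}) (a : {i : ZMod k // i ≠ 0})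
    (haD : a ∈ D) (ha1 : 2 ≤ a.1.val)
    (haD' : ∀ b : {i : ZMod k // i ≠ 0}, b.1 = a.1 - 1 → b ∉ D) :
    ∑ pi : Equiv.Perm (ZMod k), ((Equiv.Perm.sign pi : ℤ) : ℚ) *
      PrU (⋂ i : {i : ZMod k // i ≠ 0},
        {om : OmS k r p |
          Jmem k r p om i (if i ∈ D then i.1 - 1 else i.1) (pi i.1 + 1)}) = 0 := by
  haveI : Fact (1 < k) := ⟨lt_of_le_of_lt hr hrk⟩
  have h10 : (1 : ZMod k) ≠ 0 := one_ne_zero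
  have ha1' : a.1 ≠ 1 := fun h => by rw [h, ZMod.val_one] at ha1; omega
  have ha'0 : a.1 - 1 ≠ 0 := sub_ne_zero.mpr ha1'
  let a' : {i : ZMod k // i ≠ 0} := ⟨a.1 - 1, ha'0⟩
  have hne : a'.1 ≠ a.1 := fun h => h10 (sub_eq_self.mp h)
  have hnes : a ≠ a' := fun h => hne (congrArg Subtype.val h).symm
  let c : {i : ZMod k // i ≠ 0} → ZMod k := fun i => if i ∈ D then i.1 - 1 else i.1
  have hc : c a' = c a := by
    show (if a' ∈ D then a'.1 - 1 else a'.1) = (if a ∈ D then a.1 - 1 else a.1)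
    rw [if_neg (haD' a' rfl), if_pos haD]
  let τ : Equiv.Perm (ZMod k) := Equiv.swap a.1 a'.1
  let τp : Equiv.Perm {i : ZMod k // i ≠ 0} := Equiv.swap a a'
  have hτ : ∀ i : {i : ZMod k // i ≠ 0}, τ i.1 = (τp i).1 := by
    intro i
    by_cases h1 : i = a
    · rw [h1]
      show Equiv.swap a.1 a'.1 a.1 = (Equiv.swap a a' a).1
      simp
    · by_cases h2 : i = a'
      · rw [h2]
        show Equiv.swap a.1 a'.1 a'.1 = (Equiv.swap a a' a').1
        simp
      · show Equiv.swap a.1 a'.1 i.1 = (Equiv.swap a a' i).1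
        rw [Equiv.swap_apply_of_ne_of_ne (fun h => h1 (Subtype.ext h))
            (fun h => h2 (Subtype.ext h)), Equiv.swap_apply_of_ne_of_ne h1 h2]
  have hτpτp : ∀ i, τp (τp i) = i := fun i => Equiv.swap_apply_self a a' i
  have hcswap : ∀ i, c (τp i) = c i := by
    intro i
    by_cases h1 : i = a
    · rw [h1]
      show c (Equiv.swap a a' a) = c a
      rw [Equiv.swap_apply_left]; exact hc
    · by_cases h2 : i = a'
      · rw [h2]
        show c (Equiv.swap a a' a') = c a'
        rw [Equiv.swap_apply_right]; exact hc.symm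
      · show c (Equiv.swap a a' i) = c i
        rw [Equiv.swap_apply_of_ne_of_ne h1 h2]
  let σ : OmS k r p → OmS k r p := fun om =>
    ⟨(om.1.1, fun i => om.1.2 (τp i)), om.2.1, om.2.2.comp τp.surjective⟩
  have hσσ : ∀ om, σ (σ om) = om := by
    intro om
    apply Subtype.ext
    have h4 : (fun i => om.1.2 (τp (τp i))) = om.1.2 := funext fun i => by rw [hτpτp]
    show ((om.1.1, fun i => om.1.2 (τp (τp i))) : _ × _) = om.1
    rw [h4]
  let E : Equiv.Perm (ZMod k) → Set (OmS k r p) := fun π =>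
    ⋂ i : {i : ZMod k // i ≠ 0}, {om : OmS k r p | Jmem k r p om i (c i) (π i.1 + 1)}
  have hmem : ∀ (om : OmS k r p) (π : Equiv.Perm (ZMod k)),
      σ om ∈ E (π * τ) ↔ om ∈ E π := by
    intro om π
    simp only [E, Set.mem_iInter, Set.mem_setOf_eq]
    have hJ : ∀ (i : {i : ZMod k // i ≠ 0}),
        Jmem k r p (σ om) i (c i) ((π * τ) i.1 + 1)
        ↔ Jmem k r p om (τp i) (c (τp i)) (π (τp i).1 + 1) := by
      intro i
      rw [hcswap]
      have h1 : (π * τ) i.1 = π (τp i).1 := by rw [Equiv.Perm.mul_apply, hτ]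
      rw [h1]
      exact Iff.rfl
    constructor
    · intro h i
      have h2 := (hJ (τp i)).mp (h (τp i))
      rwa [hτpτp] at h2
    · intro h i
      exact (hJ i).mpr (h (τp i))
  have hcard : ∀ π : Equiv.Perm (ZMod k), Nat.card (E (π * τ)) = Nat.card (E π) := by
    intro π
    refine Nat.card_congr ⟨fun x => ⟨σ x.1, ?_⟩, fun y => ⟨σ y.1, (hmem y.1 π).mpr y.2⟩,
      fun x => Subtype.ext (hσσ x.1), fun y => Subtype.ext (hσσ y.1)⟩
    have := hmem (σ x.1) π
    rw [hσσ x.1] at this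
    exact this.mp x.2
  have hPrU : ∀ π : Equiv.Perm (ZMod k), PrU (E (π * τ)) = PrU (E π) := by
    intro π
    unfold PrU
    rw [hcard π]
  have hsign : ∀ π : Equiv.Perm (ZMod k),
      Equiv.Perm.sign (π * τ) = - Equiv.Perm.sign π := by
    intro π
    rw [Equiv.Perm.sign_mul]
    show Equiv.Perm.sign π * Equiv.Perm.sign (Equiv.swap a.1 a'.1) = _
    rw [Equiv.Perm.sign_swap hne.symm, mul_neg_one]
  have hEq : (∑ pi : Equiv.Perm (ZMod k), ((Equiv.Perm.sign pi : ℤ) : ℚ) *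
      PrU (⋂ i : {i : ZMod k // i ≠ 0},
        {om : OmS k r p |
          Jmem k r p om i (if i ∈ D then i.1 - 1 else i.1) (pi i.1 + 1)}))
      = ∑ pi : Equiv.Perm (ZMod k), ((Equiv.Perm.sign pi : ℤ) : ℚ) * PrU (E pi) := rfl
  rw [hEq]
  have key : (∑ pi : Equiv.Perm (ZMod k), ((Equiv.Perm.sign pi : ℤ) : ℚ) * PrU (E pi))
      = - ∑ pi : Equiv.Perm (ZMod k), ((Equiv.Perm.sign pi : ℤ) : ℚ) * PrU (E pi) := by
    conv_lhs => rw [← Equiv.sum_comp (Equiv.mulRight τ)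
      (fun pi : Equiv.Perm (ZMod k) => ((Equiv.Perm.sign pi : ℤ) : ℚ) * PrU (E pi))]
    rw [← Finset.sum_neg_distrib]
    apply Finset.sum_congr rfl
    intro π _
    have h3 : (Equiv.mulRight τ) π = π * τ := rfl
    rw [h3, hsign π, hPrU π]
    push_cast [Units.val_neg]
    ring
  linarith [key]
end
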